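/- For all integers k ≥ 2 and m ≥ 2, the sum over all strictly increasing sequences 1 = i_1 < i_2 < ... < i_k = m of the product ∏_{j=1}^{k-1} (i_{j+1} - i_j) equals the binomial coefficient C(m+k-3, 2k-3). -/

import Mathlib

open Finset

private lemma sort_insert_max {s : Finset ℕ} {b : ℕ} (h : ∀ x ∈ s, x ≤ b) (hb : b ∉ s) :
    (insert b s).sort (· ≤ ·) = s.sort (· ≤ ·) ++ [b] := by
  have hperm : List.Perm ((insert b s).sort (· ≤ ·)) (s.sort (· ≤ ·) ++ [b]) :=
    ((Finset.sort_perm_toList _ _).trans (Finset.toList_insert hb)).trans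
      ((((Finset.sort_perm_toList s (· ≤ ·)).symm).cons b).trans
        (List.perm_append_singleton _ _).symm)
  refine List.Perm.eq_of_pairwise' (Finset.pairwise_sort _ _) ?_ hperm
  rw [List.pairwise_append]
  refine ⟨Finset.pairwise_sort _ _, List.pairwise_singleton _ _, ?_⟩
  intro x hx y hy
  simp only [List.mem_singleton] at hy
  subst hy
  exact h x ((Finset.mem_sort _).mp hx)

private lemma sum_choose_mul (a : ℕ) (N : ℕ) :
    ∑ j ∈ Icc a N, Nat.choose j a * (N + 1 - j) = Nat.choose (N + 2) (a + 2) := by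
  induction N with
  | zero =>
    rcases Nat.eq_zero_or_pos a with rfl | ha
    · simp
    · rw [Icc_eq_empty (by omega), Finset.sum_empty,
        Nat.choose_eq_zero_of_lt (by omega)]
  | succ N ih =>
    have h1 : ∀ j ∈ Icc a (N + 1),
        Nat.choose j a * (N + 1 + 1 - j) = Nat.choose j a * (N + 1 - j) + Nat.choose j a := by
      intro j hj
      simp only [mem_Icc] at hj
      have : N + 1 + 1 - j = (N + 1 - j) + 1 := by omega
      rw [this, Nat.mul_add, mul_one]
    rw [Finset.sum_congr rfl h1, Finset.sum_add_distrib, Nat.sum_Icc_choose]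
    have h2 : ∑ j ∈ Icc a (N + 1), Nat.choose j a * (N + 1 - j)
        = ∑ j ∈ Icc a N, Nat.choose j a * (N + 1 - j) := by
      refine (Finset.sum_subset (Icc_subset_Icc_right (Nat.le_succ N)) ?_).symm
      intro j hj hj'
      simp only [mem_Icc] at hj hj'
      have : j = N + 1 := by omega
      subst this
      simp
    rw [h2, ih]
    have pascal : Nat.choose (N + 2 + 1) (a + 2)
        = Nat.choose (N + 2) (a + 1) + Nat.choose (N + 2) (a + 2) :=
      Nat.choose_succ_succ' (N + 2) (a + 1)
    have e1 : N + 1 + 1 = N + 2 := rfl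
    have e2 : N + 1 + 2 = N + 2 + 1 := rfl
    simp only [e1, e2]
    omega

/-- The key product computation: appending the max `m`. -/
private lemma prod_insert_max (k m i : ℕ) (t : Finset ℕ) (hk : 1 ≤ k)
    (hsub : t ⊆ Icc 1 i) (hcard : t.card = k) (hit : i ∈ t) (him : i < m) :
    ∏ j ∈ range k,
        (((insert m t).sort (· ≤ ·)).getD (j + 1) 0 - ((insert m t).sort (· ≤ ·)).getD j 0)
      = (∏ j ∈ range (k - 1),
          ((t.sort (· ≤ ·)).getD (j + 1) 0 - (t.sort (· ≤ ·)).getD j 0)) * (m - i) := by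
  have hle : ∀ x ∈ t, x ≤ i := fun x hx => (mem_Icc.mp (hsub hx)).2
  have hmt : m ∉ t := fun h => absurd (hle m h) (by omega)
  have hsort : (insert m t).sort (· ≤ ·) = t.sort (· ≤ ·) ++ [m] :=
    sort_insert_max (fun x hx => le_of_lt (lt_of_le_of_lt (hle x hx) him)) hmt
  have hlen : (t.sort (· ≤ ·)).length = k := by rw [Finset.length_sort, hcard]
  obtain ⟨k', rfl⟩ : ∃ k', k = k' + 1 := ⟨k - 1, by omega⟩
  rw [hsort, Finset.prod_range_succ]
  have hlast : (t.sort (· ≤ ·)).getD k' 0 = i := by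
    have h1 : t = insert i (t.erase i) := (Finset.insert_erase hit).symm
    have h2 : t.sort (· ≤ ·) = (t.erase i).sort (· ≤ ·) ++ [i] := by
      conv_lhs => rw [h1]
      exact sort_insert_max (fun x hx => hle x (Finset.mem_of_mem_erase hx))
        (Finset.notMem_erase _ _)
    have h3 : ((t.erase i).sort (· ≤ ·)).length = k' := by
      rw [Finset.length_sort, Finset.card_erase_of_mem hit, hcard]
      omega
    rw [h2, List.getD_append_right _ _ _ _ (by omega), h3]
    simp
  have hgk : (t.sort (· ≤ ·) ++ [m]).getD (k' + 1) 0 = m := by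
    rw [List.getD_append_right _ _ _ _ (by omega), hlen]
    simp
  have hgk' : (t.sort (· ≤ ·) ++ [m]).getD k' 0 = i := by
    rw [List.getD_append _ _ _ _ (by omega), hlast]
  rw [hgk, hgk']
  have : ∀ j ∈ range k',
      ((t.sort (· ≤ ·) ++ [m]).getD (j + 1) 0 - (t.sort (· ≤ ·) ++ [m]).getD j 0)
      = ((t.sort (· ≤ ·)).getD (j + 1) 0 - (t.sort (· ≤ ·)).getD j 0) := by
    intro j hj
    simp only [mem_range] at hj
    rw [List.getD_append _ _ _ _ (by omega), List.getD_append _ _ _ _ (by omega)]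
  rw [Finset.prod_congr rfl this]
  simp

private lemma recur (k m : ℕ) (hk : 2 ≤ k) (hm : 3 ≤ m) :
    ∑ s ∈ ((Icc 1 m).powersetCard (k + 1)).filter (fun s => 1 ∈ s ∧ m ∈ s),
      ∏ j ∈ range k, ((s.sort (· ≤ ·)).getD (j + 1) 0 - (s.sort (· ≤ ·)).getD j 0)
    = ∑ i ∈ Icc 2 (m - 1),
        (∑ t ∈ ((Icc 1 i).powersetCard k).filter (fun t => 1 ∈ t ∧ i ∈ t),
          ∏ j ∈ range (k - 1),
            ((t.sort (· ≤ ·)).getD (j + 1) 0 - (t.sort (· ≤ ·)).getD j 0)) * (m - i) := by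
  simp only [Finset.sum_mul]
  rw [Finset.sum_sigma']
  refine (Finset.sum_nbij' (i := fun p => insert m p.2)
    (j := fun s => ⟨(s.erase m).sup id, s.erase m⟩) ?_ ?_ ?_ ?_ ?_).symm
  · -- forward membership
    rintro ⟨i, t⟩ hp
    simp only [Finset.mem_sigma, mem_filter, mem_powersetCard, mem_Icc] at hp ⊢
    obtain ⟨⟨hi2, him⟩, ⟨hsub, hcard⟩, h1t, hit⟩ := hp
    have hle : ∀ x ∈ t, x ≤ i := fun x hx => (mem_Icc.mp (hsub hx)).2
    have hmt : m ∉ t := fun h => absurd (hle m h) (by omega)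
    refine ⟨⟨?_, ?_⟩, ?_, ?_⟩
    · intro x hx
      rcases Finset.mem_insert.mp hx with rfl | hx
      · exact mem_Icc.mpr ⟨by omega, le_rfl⟩
      · have := mem_Icc.mp (hsub hx); exact mem_Icc.mpr ⟨this.1, by omega⟩
    · rw [Finset.card_insert_of_notMem hmt, hcard]
    · exact Finset.mem_insert_of_mem h1t
    · exact Finset.mem_insert_self _ _
  · -- backward membership
    intro s hs
    simp only [mem_filter, mem_powersetCard] at hs
    obtain ⟨⟨hsub, hcard⟩, h1s, hms⟩ := hs
    have h1t : (1 : ℕ) ∈ s.erase m := Finset.mem_erase.mpr ⟨by omega, h1s⟩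
    have hne : (s.erase m).Nonempty := ⟨1, h1t⟩
    obtain ⟨b, hbt, hbe⟩ := Finset.exists_mem_eq_sup (s.erase m) hne id
    have hsupmem : (s.erase m).sup id ∈ s.erase m := by rw [hbe]; exact hbt
    have hle : ∀ x ∈ s.erase m, x ≤ (s.erase m).sup id := fun x hx => Finset.le_sup (f := id) hx
    have hcard' : (s.erase m).card = k := by rw [Finset.card_erase_of_mem hms, hcard]; omega
    have hsup1 : 1 ≤ (s.erase m).sup id :=
      (mem_Icc.mp (hsub (Finset.mem_of_mem_erase hsupmem))).1
    have hsupne1 : (s.erase m).sup id ≠ 1 := by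
      intro h
      have : s.erase m ⊆ {1} := by
        intro x hx
        have hx1 := (mem_Icc.mp (hsub (Finset.mem_of_mem_erase hx))).1
        have hx2 := hle x hx
        simp only [Finset.mem_singleton]
        omega
      have := Finset.card_le_card this
      simp [hcard'] at this
      omega
    have hsupm : (s.erase m).sup id ≤ m - 1 := by
      have h1 := (mem_Icc.mp (hsub (Finset.mem_of_mem_erase hsupmem))).2
      have h2 := (Finset.mem_erase.mp hsupmem).1
      omega
    simp only [Finset.mem_sigma, mem_filter, mem_powersetCard, mem_Icc]
    refine ⟨⟨by omega, hsupm⟩, ⟨?_, hcard'⟩, h1t, hsupmem⟩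
    intro x hx
    exact mem_Icc.mpr ⟨(mem_Icc.mp (hsub (Finset.mem_of_mem_erase hx))).1, hle x hx⟩
  · -- left inverse
    rintro ⟨i, t⟩ hp
    simp only [Finset.mem_sigma, mem_filter, mem_powersetCard, mem_Icc] at hp
    obtain ⟨⟨hi2, him⟩, ⟨hsub, hcard⟩, h1t, hit⟩ := hp
    have hle : ∀ x ∈ t, x ≤ i := fun x hx => (mem_Icc.mp (hsub hx)).2
    have hmt : m ∉ t := fun h => absurd (hle m h) (by omega)
    have h1 : (insert m t).erase m = t := Finset.erase_insert hmt
    have h2 : ((insert m t).erase m).sup id = i := by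
      rw [h1]
      exact le_antisymm (Finset.sup_le hle) (Finset.le_sup (f := id) hit)
    dsimp only
    rw [h1] at h2 ⊢
    rw [h2]
  · -- right inverse
    intro s hs
    simp only [mem_filter, mem_powersetCard] at hs
    exact Finset.insert_erase hs.2.2
  · -- value agreement
    rintro ⟨i, t⟩ hp
    simp only [Finset.mem_sigma, mem_filter, mem_powersetCard, mem_Icc] at hp
    obtain ⟨⟨hi2, him⟩, ⟨hsub, hcard⟩, h1t, hit⟩ := hp
    exact (prod_insert_max k m i t (by omega) hsub hcard hit (by omega)).symm

private lemma main_aux : ∀ k, 2 ≤ k → ∀ m, 2 ≤ m →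
    ∑ s ∈ ((Finset.Icc 1 m).powersetCard k).filter (fun s => 1 ∈ s ∧ m ∈ s),
      ∏ j ∈ Finset.range (k - 1),
        ((s.sort (· ≤ ·)).getD (j + 1) 0 - (s.sort (· ≤ ·)).getD j 0) =
      Nat.choose (m + k - 3) (2 * k - 3) := by
  intro k hk
  induction k, hk using Nat.le_induction with
  | base =>
    intro m hm
    have hset : ((Icc 1 m).powersetCard 2).filter (fun s => 1 ∈ s ∧ m ∈ s)
        = {({1, m} : Finset ℕ)} := by
      ext s
      simp only [mem_filter, mem_powersetCard, Finset.mem_singleton]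
      constructor
      · rintro ⟨⟨hsub, hcard⟩, h1, hm'⟩
        have hsub2 : ({1, m} : Finset ℕ) ⊆ s := by
          intro x hx
          rcases Finset.mem_insert.mp hx with rfl | hx
          · exact h1
          · simp only [Finset.mem_singleton] at hx; subst hx; exact hm'
        have hc2 : ({1, m} : Finset ℕ).card = 2 := by
          rw [Finset.card_insert_of_notMem (by simp; omega), Finset.card_singleton]
        exact (Finset.eq_of_subset_of_card_le hsub2 (by omega)).symm
      · rintro rfl
        refine ⟨⟨?_, ?_⟩, by simp, by simp⟩
        · intro x hx
          rcases Finset.mem_insert.mp hx with rfl | hx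
          · exact mem_Icc.mpr ⟨le_rfl, by omega⟩
          · simp only [Finset.mem_singleton] at hx; subst hx
            exact mem_Icc.mpr ⟨by omega, le_rfl⟩
        · rw [Finset.card_insert_of_notMem (by simp; omega), Finset.card_singleton]
    rw [hset, Finset.sum_singleton]
    have hpair : ({1, m} : Finset ℕ) = insert m {1} := Finset.pair_comm 1 m
    have hsort : (({1, m} : Finset ℕ)).sort (· ≤ ·) = [1, m] := by
      rw [hpair, sort_insert_max (by simp; omega) (by simp; omega), Finset.sort_singleton]
      rfl
    rw [hsort]
    have h1 : m + 2 - 3 = m - 1 := by omega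
    have h2 : 2 * 2 - 3 = 1 := by omega
    rw [h1, h2, Nat.choose_one_right]
    simp
  | succ k hk ih =>
    intro m hm
    rcases eq_or_lt_of_le hm with rfl | hm3
    · -- m = 2
      have hcard : (Icc 1 2).card = 2 := by rw [Nat.card_Icc]
      rw [Finset.powersetCard_eq_empty.mpr (by omega), Finset.filter_empty, Finset.sum_empty]
      rw [Nat.choose_eq_zero_of_lt (by omega)]
    · have hm3' : 3 ≤ m := hm3
      have hrange : k + 1 - 1 = k := by omega
      rw [hrange, recur k m hk hm3']
      have hIH : ∀ i ∈ Icc 2 (m - 1),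
          (∑ t ∈ ((Icc 1 i).powersetCard k).filter (fun t => 1 ∈ t ∧ i ∈ t),
            ∏ j ∈ range (k - 1),
              ((t.sort (· ≤ ·)).getD (j + 1) 0 - (t.sort (· ≤ ·)).getD j 0)) * (m - i)
          = Nat.choose (i + k - 3) (2 * k - 3) * (m - i) := by
        intro i hi
        simp only [mem_Icc] at hi
        rw [ih i hi.1]
      rw [Finset.sum_congr rfl hIH]
      -- reindex : j = i + k - 3
      have hstep1 : ∑ i ∈ Icc 2 (m - 1), Nat.choose (i + k - 3) (2 * k - 3) * (m - i)
          = ∑ j ∈ Icc (k - 1) (m + k - 4), Nat.choose j (2 * k - 3) * (m + k - 3 - j) := by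
        refine Finset.sum_nbij' (i := fun i => i + k - 3) (j := fun j => j + 3 - k)
          ?_ ?_ ?_ ?_ ?_
        · intro i hi; simp only [mem_Icc] at hi ⊢; omega
        · intro j hj; simp only [mem_Icc] at hj ⊢; omega
        · intro i hi; simp only [mem_Icc] at hi; omega
        · intro j hj; simp only [mem_Icc] at hj; omega
        · intro i hi
          simp only [mem_Icc] at hi
          congr 1
          omega
      rw [hstep1]
      have hstep2 : ∑ j ∈ Icc (k - 1) (m + k - 4), Nat.choose j (2 * k - 3) * (m + k - 3 - j)
          = ∑ j ∈ Icc (2 * k - 3) (m + k - 4), Nat.choose j (2 * k - 3) * (m + k - 3 - j) := by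
        refine (Finset.sum_subset (Icc_subset_Icc_left (by omega)) ?_).symm
        intro j hj hj'
        simp only [mem_Icc] at hj hj'
        rw [Nat.choose_eq_zero_of_lt (by omega), zero_mul]
      rw [hstep2]
      have key := sum_choose_mul (2 * k - 3) (m + k - 4)
      have e1 : m + k - 4 + 1 = m + k - 3 := by omega
      have e2 : m + k - 4 + 2 = m + (k + 1) - 3 := by omega
      have e3 : 2 * k - 3 + 2 = 2 * (k + 1) - 3 := by omega
      rw [e1, e2, e3] at key
      exact key

/-- For `k ≥ 2`, `m ≥ 2`, the sum over all strictly increasing sequences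
`1 = i₁ < i₂ < ⋯ < i_k = m` of `∏_{j=1}^{k-1} (i_{j+1} - i_j)` equals `C(m+k-3, 2k-3)`.
The sum ranges over `k`-element subsets of `{1, …, m}` containing both `1` and `m`. -/
theorem sum_prod_diff_both_closed (k m : ℕ) (hk : 2 ≤ k) (hm : 2 ≤ m) :
    ∑ s ∈ ((Finset.Icc 1 m).powersetCard k).filter (fun s => 1 ∈ s ∧ m ∈ s),
      ∏ j ∈ Finset.range (k - 1),
        ((s.sort (· ≤ ·)).getD (j + 1) 0 - (s.sort (· ≤ ·)).getD j 0) =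
      Nat.choose (m + k - 3) (2 * k - 3) := by
  exact main_aux k hk m hm
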